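/- arXiv:1707.02646 — 5 statements merged into one kernel-verified Lean document; each statement's English description precedes it below -/
import Mathlib

section
/- Let S be a finitely generated submonoid of ℤⁿ and suppose there exists v ∈ ℤⁿ such that ⟨u, v⟩ > 0 for every nonzero u ∈ S. Then the set of irreducible elements of S is finite, it generates S as a monoid, and every subset of S that generates S as a monoid contains every irreducible element of S; in particular, the irreducible elements form the unique minimal generating set of S. -/
/-- `u` is an irreducible element of the submonoid `S` of `ℤⁿ`:
`u ≠ 0` and `u` cannot be written as the sum of two nonzero elements of `S`. -/
def IsIrredElem {n : ℕ} (S : AddSubmonoid (Fin n → ℤ)) (u : Fin n → ℤ) : Prop :=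
  u ≠ 0 ∧ ¬ ∃ v w : Fin n → ℤ, v ∈ S ∧ w ∈ S ∧ v ≠ 0 ∧ w ≠ 0 ∧ u = v + w

lemma min_gen {n : ℕ} (S : AddSubmonoid (Fin n → ℤ)) :
    ∀ T : Set (Fin n → ℤ), T ⊆ (S : Set (Fin n → ℤ)) →
      AddSubmonoid.closure T = S →
      {u : Fin n → ℤ | u ∈ S ∧ IsIrredElem S u} ⊆ T := by
  intro T hTS hT u hu
  obtain ⟨huS, hune, hirr⟩ := hu
  have : u ∈ AddSubmonoid.closure T := hT ▸ huS
  obtain ⟨l, hl, hsum⟩ := AddSubmonoid.exists_multiset_of_mem_closure this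
  -- filter out the zero elements
  set l' := l.filter (· ≠ 0) with hl'
  have hsum' : l'.sum = u := by
    have := Multiset.sum_filter_add_sum_filter_not (s := l) (· ≠ 0)
    have hz : (l.filter (fun x => ¬ x ≠ 0)).sum = 0 := by
      apply Multiset.sum_eq_zero
      intro x hx
      have := Multiset.of_mem_filter hx
      simpa using this
    rw [hz, add_zero] at this
    rw [← hsum, ← this]
  have hl'T : ∀ y ∈ l', y ∈ T := fun y hy => hl y (Multiset.mem_of_mem_filter hy)
  have hl'ne : l' ≠ 0 := by
    intro h
    rw [h] at hsum'
    exact hune hsum'.symm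
  obtain ⟨x, hx⟩ := Multiset.exists_mem_of_ne_zero hl'ne
  obtain ⟨m, hm⟩ := Multiset.exists_cons_of_mem hx
  rw [hm] at hsum' hl'T
  have hxT : x ∈ T := hl'T x (Multiset.mem_cons_self _ _)
  have hxne : x ≠ 0 := by
    have := Multiset.of_mem_filter hx
    simpa using this
  have hmS : m.sum ∈ S := AddSubmonoid.multiset_sum_mem S m
    (fun y hy => hTS (hl'T y (Multiset.mem_cons_of_mem hy)))
  rw [Multiset.sum_cons] at hsum'
  by_cases hm : m.sum = 0
  · rw [hm, add_zero] at hsum'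
    exact hsum' ▸ hxT
  · exact absurd ⟨x, m.sum, hTS hxT, hmS, hxne, hm, hsum'.symm⟩ hirr

theorem stmt1 (n : ℕ) (S : AddSubmonoid (Fin n → ℤ)) (hFG : S.FG)
    (v : Fin n → ℤ) (hv : ∀ u ∈ S, u ≠ 0 → 0 < ∑ i, u i * v i) :
    {u : Fin n → ℤ | u ∈ S ∧ IsIrredElem S u}.Finite ∧
    AddSubmonoid.closure {u : Fin n → ℤ | u ∈ S ∧ IsIrredElem S u} = S ∧
    ∀ T : Set (Fin n → ℤ), T ⊆ (S : Set (Fin n → ℤ)) →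
      AddSubmonoid.closure T = S →
      {u : Fin n → ℤ | u ∈ S ∧ IsIrredElem S u} ⊆ T := by
  refine ⟨?_, ?_, min_gen S⟩
  · obtain ⟨F, hF⟩ := hFG
    have hFS : (F : Set (Fin n → ℤ)) ⊆ S := by
      rw [← hF]; exact AddSubmonoid.subset_closure
    exact F.finite_toSet.subset (min_gen S F hFS hF)
  · apply le_antisymm
    · rw [AddSubmonoid.closure_le]
      intro u hu; exact hu.1
    · intro u huS
      -- strong induction on the dot product
      have key : ∀ k : ℕ, ∀ u ∈ S, (∑ i, u i * v i).toNat ≤ k →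
          u ∈ AddSubmonoid.closure {u : Fin n → ℤ | u ∈ S ∧ IsIrredElem S u} := by
        intro k
        induction k with
        | zero =>
          intro u huS hk
          by_cases h0 : u = 0
          · subst h0; exact zero_mem _
          · exact absurd hk (by have := hv u huS h0; omega)
        | succ k ih =>
          intro u huS hk
          by_cases h0 : u = 0
          · subst h0; exact zero_mem _
          by_cases hirr : IsIrredElem S u
          · exact AddSubmonoid.subset_closure ⟨huS, hirr⟩
          · have : ∃ a b : Fin n → ℤ, a ∈ S ∧ b ∈ S ∧ a ≠ 0 ∧ b ≠ 0 ∧ u = a + b := by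
              by_contra h
              exact hirr ⟨h0, h⟩
            obtain ⟨a, b, haS, hbS, hane, hbne, rfl⟩ := this
            have hsplit : ∑ i, (a + b) i * v i = (∑ i, a i * v i) + ∑ i, b i * v i := by
              rw [← Finset.sum_add_distrib]
              congr 1; ext i; simp [add_mul]
            have ha := hv a haS hane
            have hb := hv b hbS hbne
            have h1 : (∑ i, a i * v i).toNat ≤ k := by omega
            have h2 : (∑ i, b i * v i).toNat ≤ k := by omega
            exact AddSubmonoid.add_mem _ (ih a haS h1) (ih b hbS h2)
      exact key (∑ i, u i * v i).toNat u huS le_rfl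
end

section
/- Fix an integer m ≥ 1 and vectors u₁, …, u_s ∈ ℤⁿ that span ℝⁿ over ℝ, and let S be the submonoid of ℤⁿ generated by u₁, …, u_s. Then the set of functions S → ℕ ∪ {∞} of the form u ↦ (⟨a, u⟩ if ⟨a, u⟩ ≤ m, and ∞ otherwise), as a ranges over all a ∈ ℤⁿ with ⟨a, u⟩ ≥ 0 for every u ∈ S, is finite. -/
theorem stmt4 (m n s : ℕ) (hm : 1 ≤ m) (u : Fin s → Fin n → ℤ)
    (hspan : Submodule.span ℝ (Set.range fun i => fun j => (u i j : ℝ)) = ⊤) :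
    Set.Finite
      {f : AddSubmonoid.closure (Set.range u) → ℕ∞ |
        ∃ a : Fin n → ℤ,
          (∀ w ∈ AddSubmonoid.closure (Set.range u), 0 ≤ ∑ j, a j * w j) ∧
          ∀ w : AddSubmonoid.closure (Set.range u),
            f w = if (∑ j, a j * (w : Fin n → ℤ) j) ≤ (m : ℤ)
              then ((∑ j, a j * (w : Fin n → ℤ) j).toNat : ℕ∞) else ⊤} := by
  classical
  have hmem : ∀ i, u i ∈ AddSubmonoid.closure (Set.range u) :=
    fun i => AddSubmonoid.subset_closure (Set.mem_range_self i)
  have hTfin : (Set.pi (Set.univ : Set (Fin s))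
      (fun _ => insert (⊤ : ℕ∞) ((fun k : ℕ => (k : ℕ∞)) '' Set.Iic m))).Finite :=
    Set.Finite.pi (fun _ => ((Set.finite_Iic m).image _).insert ⊤)
  apply Set.Finite.of_finite_image
    (f := fun f : AddSubmonoid.closure (Set.range u) → ℕ∞ => fun i => f ⟨u i, hmem i⟩)
  · apply hTfin.subset
    rintro g ⟨f, ⟨a, ha0, haf⟩, rfl⟩
    intro i _
    dsimp only
    rw [haf]
    split
    · exact Or.inr ⟨_, Int.toNat_le.mpr ‹_›, rfl⟩
    · exact Or.inl rfl
  · rintro f ⟨a, ha0, haf⟩ g ⟨b, hb0, hbg⟩ heq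
    funext w
    rw [haf, hbg]
    have key : ∀ x ∈ AddSubmonoid.closure (Set.range u),
        ((∑ j, a j * x j) ≤ (m : ℤ) ∧ (∑ j, b j * x j) ≤ (m : ℤ) ∧
          (∑ j, a j * x j) = (∑ j, b j * x j)) ∨
        ((m : ℤ) < ∑ j, a j * x j ∧ (m : ℤ) < ∑ j, b j * x j) := by
      intro x hx
      induction hx using AddSubmonoid.closure_induction with
      | mem x hxr =>
        obtain ⟨i, rfl⟩ := hxr
        have h := congrFun heq i
        dsimp only at h
        rw [haf ⟨u i, hmem i⟩, hbg ⟨u i, hmem i⟩] at h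
        have na := ha0 _ (hmem i)
        have nb := hb0 _ (hmem i)
        simp only at h na nb ⊢
        by_cases h1 : (∑ j, a j * u i j) ≤ (m : ℤ) <;>
          by_cases h2 : (∑ j, b j * u i j) ≤ (m : ℤ) <;>
          simp [h1, h2] at h ⊢ <;> omega
      | zero =>
        simp
      | add x y hxc hyc ihx ihy =>
        have nax := ha0 _ hxc
        have nay := ha0 _ hyc
        have nbx := hb0 _ hxc
        have nby := hb0 _ hyc
        have hadd : ∀ c : Fin n → ℤ, (∑ j, c j * (x + y) j) =
            (∑ j, c j * x j) + (∑ j, c j * y j) := by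
          intro c
          simp [Pi.add_apply, mul_add, Finset.sum_add_distrib]
        rw [hadd a, hadd b]
        omega
    obtain h | h := key (w : Fin n → ℤ) w.2
    · rw [h.2.2]
    · rw [if_neg (not_le.mpr h.1), if_neg (not_le.mpr h.2)]
end

section
/- Let k be an algebraically closed field of characteristic 0, let m ≥ 0 be an integer, and let R = k[t]/(t^{m+1}). Let u₁, …, u_n ∈ ℤⁿ be vectors that span ℝⁿ over ℝ, and let c₁, …, c_n be units of R. Then the set of group homomorphisms α from the additive group ℤⁿ to the multiplicative group of units Rˣ with α(uᵢ) = cᵢ for all i = 1, …, n is nonempty and finite. -/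
set_option synthInstance.maxHeartbeats 1000000
set_option maxHeartbeats 1000000

open Polynomial

namespace Stmt5Aux

lemma one_add_pow_sub_mem {A : Type*} [CommRing A] (I : Ideal A) {s : ℕ} (hs : 1 ≤ s)
    {w : A} (hw : w ∈ I ^ s) (d : ℕ) (hd : 1 ≤ d) :
    (1 + w) ^ d - 1 - (d : A) * w ∈ I ^ (s + 1) := by
  induction d, hd using Nat.le_induction with
  | base => simp
  | succ d hd ih =>
    have hww : w * w ∈ I ^ (s + 1) := by
      have h1 : w * w ∈ I ^ s * I ^ s := Ideal.mul_mem_mul hw hw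
      rw [← pow_add] at h1
      exact Ideal.pow_le_pow_right (by omega) h1
    have : (1 + w) ^ (d + 1) - 1 - (((d : ℕ) + 1 : ℕ) : A) * w
        = ((1 + w) ^ d - 1 - (d : A) * w) * (1 + w) + (d : A) * (w * w) := by
      push_cast
      ring
    rw [this]
    exact Submodule.add_mem _ (Ideal.mul_mem_right _ _ ih) (Ideal.mul_mem_left _ _ hww)

variable (k : Type*) [Field k] (m : ℕ)

abbrev R := Polynomial k ⧸ Ideal.span {(Polynomial.X : Polynomial k) ^ (m + 1)}

noncomputable def φ : R k m →+* k :=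
  Ideal.Quotient.lift _ (Polynomial.evalRingHom 0) (by
    intro f hf
    rw [Ideal.mem_span_singleton] at hf
    obtain ⟨g, rfl⟩ := hf
    simp)

variable {k m}

lemma φ_mk (p : Polynomial k) : φ k m (Ideal.Quotient.mk _ p) = p.eval 0 := rfl

lemma φ_algebraMap (a : k) : φ k m (algebraMap k (R k m) a) = a := by
  have : algebraMap k (R k m) a = Ideal.Quotient.mk _ (C a) := rfl
  rw [this, φ_mk, eval_C]

noncomputable def J : Ideal (R k m) := RingHom.ker (φ k m)

lemma J_eq : (J : Ideal (R k m)) = Ideal.span {Ideal.Quotient.mk _ (X : Polynomial k)} := by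
  apply le_antisymm
  · intro z hz
    obtain ⟨p, rfl⟩ := Ideal.Quotient.mk_surjective z
    have h0 : p.eval 0 = 0 := hz
    have : (X : Polynomial k) ∣ p := by
      rwa [X_dvd_iff, coeff_zero_eq_eval_zero]
    obtain ⟨g, rfl⟩ := this
    rw [map_mul]
    exact Ideal.mul_mem_right _ _ (Ideal.subset_span rfl)
  · rw [Ideal.span_le, Set.singleton_subset_iff]
    show φ k m (Ideal.Quotient.mk _ X) = 0
    rw [φ_mk, eval_X]

lemma J_pow : (J : Ideal (R k m)) ^ (m + 1) = ⊥ := by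
  rw [J_eq, Ideal.span_singleton_pow, ← map_pow]
  have h : (Ideal.Quotient.mk (Ideal.span {(X : Polynomial k) ^ (m + 1)})) (X ^ (m + 1)) = 0 :=
    Ideal.Quotient.eq_zero_iff_mem.mpr (Ideal.subset_span rfl)
  rw [h, Ideal.span_singleton_eq_bot.mpr rfl]

variable [CharZero k]

lemma exists_pow_eq_of_unipotent {d : ℕ} (hd : 0 < d) :
    ∀ (r s : ℕ), m + 1 ≤ s + r → 1 ≤ s → ∀ u : (R k m)ˣ,
      (u : R k m) - 1 ∈ (J : Ideal (R k m)) ^ s → ∃ y : (R k m)ˣ, y ^ d = u := by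
  intro r
  induction r with
  | zero =>
    intro s hs _ u hu
    have hle : (J : Ideal (R k m)) ^ s ≤ (J : Ideal (R k m)) ^ (m + 1) :=
      Ideal.pow_le_pow_right (by omega)
    have : (u : R k m) - 1 = 0 := by
      have := hle hu
      rwa [J_pow, Ideal.mem_bot] at this
    refine ⟨1, Units.ext ?_⟩
    have : (u : R k m) = 1 := by linear_combination this
    simp [this]
  | succ r ih =>
    intro s hs hs1 u hu
    set z := (u : R k m) - 1 with hz
    have hdk : ((d : k)) ≠ 0 := Nat.cast_ne_zero.mpr hd.ne'
    set w := algebraMap k (R k m) (d : k)⁻¹ * z with hwdef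
    have hdR : ((d : ℕ) : R k m) = algebraMap k (R k m) (d : k) := by
      rw [map_natCast]
    have hdw : ((d : ℕ) : R k m) * w = z := by
      rw [hwdef, ← mul_assoc, hdR, ← map_mul, mul_inv_cancel₀ hdk, map_one, one_mul]
    have hwJs : w ∈ (J : Ideal (R k m)) ^ s := Ideal.mul_mem_left _ _ hu
    have hwJ : w ∈ (J : Ideal (R k m)) := Ideal.pow_le_self (by omega) hwJs
    have hnil : IsNilpotent w := ⟨m + 1, by
      have := Ideal.pow_mem_pow hwJ (m + 1)
      rwa [J_pow, Ideal.mem_bot] at this⟩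
    have hu1 : IsUnit (1 + w) := hnil.isUnit_one_add
    set y₁ := hu1.unit with hy₁
    have hy₁v : (y₁ : R k m) = 1 + w := hu1.unit_spec
    have hkey : ((y₁ : R k m)) ^ d - (u : R k m) ∈ (J : Ideal (R k m)) ^ (s + 1) := by
      have h2 := one_add_pow_sub_mem (J : Ideal (R k m)) hs1 hwJs d hd
      have h3 : (y₁ : R k m) ^ d - (u : R k m)
          = (1 + w) ^ d - 1 - ((d : ℕ) : R k m) * w := by
        rw [hy₁v, hdw, hz]; ring
      rw [h3]; exact h2
    have hinv : ((y₁ : R k m)) ^ d * (((y₁⁻¹ : (R k m)ˣ) : R k m)) ^ d = 1 := by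
      have h1 : (y₁ : R k m) * ((y₁⁻¹ : (R k m)ˣ) : R k m) = 1 := Units.mul_inv y₁
      calc ((y₁ : R k m)) ^ d * (((y₁⁻¹ : (R k m)ˣ) : R k m)) ^ d
          = ((y₁ : R k m) * ((y₁⁻¹ : (R k m)ˣ) : R k m)) ^ d :=
            (mul_pow (y₁ : R k m) (((y₁⁻¹ : (R k m)ˣ) : R k m)) d).symm
        _ = 1 := by rw [h1, one_pow]
    have hvmem : ((u * y₁⁻¹ ^ d : (R k m)ˣ) : R k m) - 1 ∈ (J : Ideal (R k m)) ^ (s + 1) := by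
      have heq : ((u * y₁⁻¹ ^ d : (R k m)ˣ) : R k m) - 1
          = ((u : R k m) - (y₁ : R k m) ^ d) * (((y₁⁻¹ : (R k m)ˣ) : R k m)) ^ d := by
        rw [Units.val_mul, Units.val_pow_eq_pow_val]
        linear_combination hinv
      rw [heq]
      exact Ideal.mul_mem_right _ _ (by
        have := Submodule.neg_mem _ hkey
        simpa using this)
    obtain ⟨y₂, hy₂⟩ := ih (s + 1) (by omega) (by omega) (u * y₁⁻¹ ^ d) hvmem
    have hone : y₁ ^ d * y₁⁻¹ ^ d = 1 := by
      rw [← mul_pow y₁ y₁⁻¹ d, mul_inv_cancel, one_pow]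
    refine ⟨y₁ * y₂, ?_⟩
    rw [mul_pow y₁ y₂ d, hy₂, ← mul_assoc, mul_comm (y₁ ^ d) u, mul_assoc, hone, mul_one]

lemma φ_unit_ne_zero (u : (R k m)ˣ) : φ k m (u : R k m) ≠ 0 := by
  have h : φ k m (u : R k m) * φ k m ((u⁻¹ : (R k m)ˣ) : R k m) = 1 := by
    rw [← map_mul, Units.mul_inv, map_one]
  intro h0
  rw [h0, zero_mul] at h
  exact zero_ne_one h

lemma exists_pow_eq [IsAlgClosed k] {d : ℕ} (hd : 0 < d) (c : (R k m)ˣ) :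
    ∃ y : (R k m)ˣ, y ^ d = c := by
  have ha : φ k m (c : R k m) ≠ 0 := φ_unit_ne_zero c
  obtain ⟨b, hb⟩ := IsAlgClosed.exists_pow_nat_eq (φ k m (c : R k m)) hd
  have hbne : b ≠ 0 := by
    intro h; rw [h, zero_pow hd.ne'] at hb; exact ha hb.symm
  set bu : (R k m)ˣ := Units.map (algebraMap k (R k m) : k →* R k m) (Units.mk0 b hbne) with hbu
  have hbuv : (bu : R k m) = algebraMap k (R k m) b := rfl
  have hbuinv : ((bu⁻¹ : (R k m)ˣ) : R k m) = algebraMap k (R k m) b⁻¹ := rfl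
  set u : (R k m)ˣ := (bu ^ d)⁻¹ * c with hu
  have hφu : φ k m (u : R k m) = 1 := by
    have : ((bu ^ d)⁻¹ : (R k m)ˣ) = (bu⁻¹) ^ d := by rw [inv_pow]
    rw [hu, Units.val_mul, map_mul, this, Units.val_pow_eq_pow_val, hbuinv, map_pow,
      φ_algebraMap, ← hb]
    field_simp
    rw [one_div, inv_pow, inv_mul_cancel₀ (pow_ne_zero _ hbne)]
  have humem : (u : R k m) - 1 ∈ (J : Ideal (R k m)) ^ 1 := by
    rw [pow_one]
    show φ k m _ = 0
    rw [map_sub, hφu, map_one, sub_self]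
  obtain ⟨w, hw⟩ := exists_pow_eq_of_unipotent hd m 1 (by omega) le_rfl u humem
  refine ⟨bu * w, ?_⟩
  rw [mul_pow bu w d, hw, hu, ← mul_assoc, mul_inv_cancel, one_mul]

lemma torsion_eq_one {d : ℕ} (hd : 0 < d) (y : (R k m)ˣ) (h1 : y ^ d = 1)
    (h2 : φ k m (y : R k m) = 1) : y = 1 := by
  have hyd : ((y : R k m)) ^ d = 1 := by
    rw [← Units.val_pow_eq_pow_val, h1, Units.val_one]
  have key : ∀ s : ℕ, (y : R k m) - 1 ∈ (J : Ideal (R k m)) ^ (s + 1) := by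
    intro s
    induction s with
    | zero =>
      refine (pow_one (J : Ideal (R k m))).ge ?_
      show φ k m _ = 0
      rw [map_sub, h2, map_one, sub_self]
    | succ s ihs =>
      set z := (y : R k m) - 1 with hz
      have hexp := one_add_pow_sub_mem ((J : Ideal (R k m))) (by omega) ihs d hd
      have hdz : ((d : ℕ) : R k m) * z ∈ (J : Ideal (R k m)) ^ (s + 1 + 1) := by
        have heq : ((d : ℕ) : R k m) * z = -((1 + z) ^ d - 1 - ((d : ℕ) : R k m) * z) := by
          have h3 : (1 : R k m) + z = (y : R k m) := by rw [hz]; ring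
          rw [h3, hyd]; ring
        rw [heq]
        exact Submodule.neg_mem _ hexp
      have hdk : ((d : k)) ≠ 0 := Nat.cast_ne_zero.mpr hd.ne'
      have h4 : z = algebraMap k (R k m) (d : k)⁻¹ * (((d : ℕ) : R k m) * z) := by
        rw [← mul_assoc, ← map_natCast (algebraMap k (R k m)) d, ← map_mul,
          inv_mul_cancel₀ hdk, map_one, one_mul]
      rw [h4]
      exact Ideal.mul_mem_left _ _ hdz
  have hbot := key m
  rw [J_pow, Ideal.mem_bot, sub_eq_zero] at hbot
  exact Units.ext (by rw [hbot, Units.val_one])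

lemma roots_of_unity_finite (d : ℕ) (hd : 0 < d) :
    {y : (R k m)ˣ | y ^ d = 1}.Finite := by
  classical
  have hinj : Set.InjOn (fun y : (R k m)ˣ => φ k m (y : R k m)) {y | y ^ d = 1} := by
    intro y₁ h₁ y₂ h₂ h
    have hy₁ : y₁ ^ d = 1 := h₁
    have hy₂ : y₂ ^ d = 1 := h₂
    have h12 : (y₁ * y₂⁻¹) ^ d = 1 := by
      rw [mul_pow y₁ y₂⁻¹ d, hy₁, inv_pow y₂ d, hy₂, inv_one, one_mul]
    have hφ2 : φ k m ((y₂ : R k m)) * φ k m ((y₂⁻¹ : (R k m)ˣ) : R k m) = 1 := by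
      rw [← map_mul, Units.mul_inv, map_one]
    have hφ12 : φ k m ((y₁ * y₂⁻¹ : (R k m)ˣ) : R k m) = 1 := by
      rw [Units.val_mul, map_mul, show φ k m ((y₁ : R k m)) = φ k m ((y₂ : R k m)) from h, hφ2]
    have := torsion_eq_one hd _ h12 hφ12
    rwa [mul_inv_eq_one] at this
  have himg : (fun y : (R k m)ˣ => φ k m (y : R k m)) '' {y | y ^ d = 1}
      ⊆ {x : k | x ^ d = 1} := by
    rintro x ⟨y, hy, rfl⟩
    have hy' : y ^ d = 1 := hy
    show φ k m (y : R k m) ^ d = 1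
    rw [← map_pow, ← Units.val_pow_eq_pow_val, hy', Units.val_one, map_one]
  have hfin : {x : k | x ^ d = 1}.Finite := by
    have hsub : {x : k | x ^ d = 1} ⊆ ↑(Polynomial.nthRoots d (1 : k)).toFinset := by
      intro x hx
      rw [Finset.mem_coe, Multiset.mem_toFinset, Polynomial.mem_nthRoots hd]
      exact hx
    exact Set.Finite.subset (Polynomial.nthRoots d (1 : k)).toFinset.finite_toSet hsub
  exact Set.Finite.of_finite_image (hfin.subset himg) hinj

lemma roots_of_unity_finite_z (d : ℤ) (hd : d ≠ 0) :
    {y : (R k m)ˣ | y ^ d = 1}.Finite := by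
  have hsub : {y : (R k m)ˣ | y ^ d = 1} ⊆ {y | y ^ d.natAbs = 1} := by
    intro y hy
    have h : y ^ d = 1 := hy
    have h2 : y ^ ((d.natAbs : ℤ)) = 1 := by
      rcases Int.natAbs_eq d with he | he
      · rw [← he, h]
      · rw [show ((d.natAbs : ℤ)) = -d by omega, zpow_neg, h, inv_one]
    rw [zpow_natCast] at h2
    exact h2
  exact (roots_of_unity_finite d.natAbs (by omega)).subset hsub

lemma zpow_fiber_finite (d : ℤ) (hd : d ≠ 0) (v : (R k m)ˣ) :
    {y : (R k m)ˣ | y ^ d = v}.Finite := by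
  rcases Set.eq_empty_or_nonempty {y : (R k m)ˣ | y ^ d = v} with he | ⟨y₀, hy₀⟩
  · rw [he]; exact Set.finite_empty
  · have hy₀' : y₀ ^ d = v := hy₀
    have hsub : {y : (R k m)ˣ | y ^ d = v} ⊆ (fun t => t * y₀) '' {y | y ^ d = 1} := by
      intro y hy
      have hyv : y ^ d = v := hy
      refine ⟨y * y₀⁻¹, ?_, by group⟩
      show (y * y₀⁻¹) ^ d = 1
      rw [mul_zpow y y₀⁻¹ d, inv_zpow y₀ d, hyv, hy₀', mul_inv_cancel]
    exact Set.Finite.subset ((roots_of_unity_finite_z d hd).image _) hsub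

lemma exists_zpow_eq [IsAlgClosed k] {d : ℤ} (hd : d ≠ 0) (c : (R k m)ˣ) :
    ∃ y : (R k m)ˣ, y ^ d = c := by
  obtain ⟨y, hy⟩ := exists_pow_eq (k := k) (m := m) (d := d.natAbs) (by omega) c
  rcases Int.natAbs_eq d with he | he
  · exact ⟨y, by rw [he, zpow_natCast, hy]⟩
  · refine ⟨y⁻¹, ?_⟩
    rw [he, zpow_neg, ← inv_zpow, inv_inv, zpow_natCast, hy]

section PartB

noncomputable instance : Module ℤ (Additive (R k m)ˣ) := AddCommGroup.toIntModule (Additive (R k m)ˣ)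

noncomputable def Lmap {n : ℕ} (α : Multiplicative (Fin n → ℤ) →* (R k m)ˣ) :
    (Fin n → ℤ) →ₗ[ℤ] Additive (R k m)ˣ :=
  AddMonoidHom.toIntLinearMap (M := Fin n → ℤ) (M₂ := Additive (R k m)ˣ) (MonoidHom.toAdditiveRight α)

lemma Lmap_apply {n : ℕ} (α : Multiplicative (Fin n → ℤ) →* (R k m)ˣ) (x : Fin n → ℤ) :
    Lmap α x = Additive.ofMul (α (Multiplicative.ofAdd x)) := rfl

lemma Lmap_inj {n : ℕ} (α β : Multiplicative (Fin n → ℤ) →* (R k m)ˣ)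
    (h : Lmap α = Lmap β) : α = β := by
  apply MonoidHom.ext
  intro x
  have h2 := LinearMap.congr_fun h (Multiplicative.toAdd x)
  rw [Lmap_apply, Lmap_apply] at h2
  exact Additive.ofMul.injective h2

noncomputable def Mmap {n : ℕ} (f : (Fin n → ℤ) →ₗ[ℤ] Additive (R k m)ˣ) :
    Multiplicative (Fin n → ℤ) →* (R k m)ˣ :=
  AddMonoidHom.toMultiplicativeLeft f.toAddMonoidHom

lemma Mmap_apply {n : ℕ} (f : (Fin n → ℤ) →ₗ[ℤ] Additive (R k m)ˣ) (x : Fin n → ℤ) :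
    Mmap f (Multiplicative.ofAdd x) = Additive.toMul (f x) := rfl

end PartB

end Stmt5Aux
theorem stmt5 (k : Type*) [Field k] [IsAlgClosed k] [CharZero k] (m n : ℕ)
    (u : Fin n → Fin n → ℤ)
    (hspan : Submodule.span ℝ (Set.range fun i => fun j => (u i j : ℝ)) = ⊤)
    (c : Fin n → (Polynomial k ⧸ Ideal.span {(Polynomial.X : Polynomial k) ^ (m + 1)})ˣ) :
    {α : Multiplicative (Fin n → ℤ) →*
        (Polynomial k ⧸ Ideal.span {(Polynomial.X : Polynomial k) ^ (m + 1)})ˣ |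
      ∀ i, α (Multiplicative.ofAdd (u i)) = c i}.Nonempty ∧
    {α : Multiplicative (Fin n → ℤ) →*
        (Polynomial k ⧸ Ideal.span {(Polynomial.X : Polynomial k) ^ (m + 1)})ˣ |
      ∀ i, α (Multiplicative.ofAdd (u i)) = c i}.Finite := by
  classical
  open Stmt5Aux in
  -- real linear independence
  have hcard : Fintype.card (Fin n) = Module.finrank ℝ (Fin n → ℝ) := by
    simp [Module.finrank_fintype_fun_eq_card]
  have hvind : LinearIndependent ℝ (fun i => fun j => (u i j : ℝ)) :=
    linearIndependent_of_top_le_span_of_card_eq_finrank hspan.ge hcard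
  -- integer matrix and determinant
  set U : Matrix (Fin n) (Fin n) ℤ := Matrix.of u with hU
  have hUr : IsUnit (U.map ((Int.cast : ℤ → ℝ))) := by
    rw [← Matrix.linearIndependent_rows_iff_isUnit]
    exact hvind
  have hdet : U.det ≠ 0 := by
    rw [Matrix.isUnit_iff_isUnit_det] at hUr
    have h2 : ((U.det : ℤ) : ℝ) ≠ 0 := by
      have h3 : ((U.det : ℤ) : ℝ) = (U.map (Int.cast : ℤ → ℝ)).det :=
        RingHom.map_det (Int.castRingHom ℝ) U
      rw [h3]
      exact hUr.ne_zero
    exact fun h => h2 (by rw [h, Int.cast_zero])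
  -- integer linear independence
  have hgind : LinearIndependent ℤ (fun i => fun j => (u i j : ℝ)) := by
    refine hvind.restrict_scalars ?_
    intro a b hab
    simpa using hab
  let g : (Fin n → ℤ) →ₗ[ℤ] (Fin n → ℝ) :=
    { toFun := fun x j => (x j : ℝ)
      map_add' := by intro x y; funext j; simp
      map_smul' := by intro a x; funext j; simp }
  have hind : LinearIndependent ℤ u := LinearIndependent.of_comp g hgind
  -- the subgroup L and the hom β on it
  set L : Submodule ℤ (Fin n → ℤ) := Submodule.span ℤ (Set.range u) with hL
  have humem : ∀ i, u i ∈ L := fun i => Submodule.subset_span ⟨i, rfl⟩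
  let bL : Module.Basis (Fin n) ℤ L := Module.Basis.span hind
  have hbL : ∀ i, (⟨u i, humem i⟩ : L) = bL i := fun i =>
    (Module.Basis.span_apply hind i).symm
  let β : L →ₗ[ℤ] Additive (Stmt5Aux.R k m)ˣ :=
    (Module.Basis.constr bL ℤ) (fun i => Additive.ofMul (c i))
  have hβu : ∀ i, β ⟨u i, humem i⟩ = Additive.ofMul (c i) := by
    intro i
    rw [hbL i]
    exact Module.Basis.constr_basis bL ℤ _ i
  -- every solution agrees with β on L
  have key : ∀ α : Multiplicative (Fin n → ℤ) →* (Stmt5Aux.R k m)ˣ,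
      (∀ i, α (Multiplicative.ofAdd (u i)) = c i) →
      ∀ x (hx : x ∈ L), Stmt5Aux.Lmap α x = β ⟨x, hx⟩ := by
    intro α hα x hx
    induction hx using Submodule.span_induction with
    | mem x hxs =>
      obtain ⟨i, rfl⟩ := hxs
      rw [Stmt5Aux.Lmap_apply, hα i, hβu i]
    | zero =>
      have h0 : (⟨(0 : Fin n → ℤ), Submodule.zero_mem L⟩ : L) = 0 := rfl
      rw [map_zero, h0, map_zero]
    | add x y hx hy ihx ihy =>
      have h0 : (⟨x + y, Submodule.add_mem L hx hy⟩ : L) = ⟨x, hx⟩ + ⟨y, hy⟩ := rfl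
      rw [map_add, h0, map_add, ihx, ihy]
    | smul a x hx ihx =>
      have h0 : (⟨a • x, Submodule.smul_mem L a hx⟩ : L) = a • (⟨x, hx⟩ : L) := rfl
      rw [map_smul, h0, map_smul, ihx]
  -- existence via Smith normal form
  obtain ⟨n', bM, bN, femb, a, hsnf⟩ := Submodule.smithNormalForm (Pi.basisFun ℤ (Fin n)) L
  have ha : ∀ j, a j ≠ 0 := by
    intro j hj0
    have h1 : ((bN j : L) : Fin n → ℤ) = a j • bM (femb j) := hsnf j
    have hbn0 : bN j ≠ 0 := bN.ne_zero j
    apply hbn0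
    have h2 : ((bN j : L) : Fin n → ℤ) = 0 := by rw [h1, hj0, zero_smul]
    exact Subtype.ext h2
  have hy : ∀ j : Fin n', ∃ y : (Stmt5Aux.R k m)ˣ,
      y ^ (a j) = Additive.toMul (β (bN j)) :=
    fun j => Stmt5Aux.exists_zpow_eq (ha j) _
  choose y hy' using hy
  let G0 : Fin n → Additive (Stmt5Aux.R k m)ˣ := fun i =>
    if h : ∃ j, femb j = i then Additive.ofMul (y h.choose) else 0
  have hG0 : ∀ j, G0 (femb j) = Additive.ofMul (y j) := by
    intro j
    have hex : ∃ j', femb j' = femb j := ⟨j, rfl⟩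
    simp only [G0, dif_pos hex]
    rw [show hex.choose = j from femb.injective hex.choose_spec]
  let αlin : (Fin n → ℤ) →ₗ[ℤ] Additive (Stmt5Aux.R k m)ˣ := (Module.Basis.constr bM ℤ) G0
  have hαβ : ∀ (x : Fin n → ℤ) (hx : x ∈ L), αlin x = β ⟨x, hx⟩ := by
    have hcomp : αlin ∘ₗ L.subtype = β := by
      apply Module.Basis.ext bN
      intro j
      have h1 : (αlin ∘ₗ L.subtype) (bN j) = αlin (a j • bM (femb j)) := by
        rw [LinearMap.comp_apply]
        congr 1
        exact hsnf j
      rw [h1, map_smul, Module.Basis.constr_basis, hG0 j]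
      apply Additive.toMul.injective
      rw [toMul_zsmul, toMul_ofMul, hy' j]
    intro x hx
    exact LinearMap.congr_fun hcomp ⟨x, hx⟩
  have hexist : ∃ α₀ : Multiplicative (Fin n → ℤ) →* (Stmt5Aux.R k m)ˣ,
      ∀ i, α₀ (Multiplicative.ofAdd (u i)) = c i := by
    refine ⟨Stmt5Aux.Mmap αlin, ?_⟩
    intro i
    rw [Stmt5Aux.Mmap_apply, hαβ (u i) (humem i), hβu i, toMul_ofMul]
  -- determinant multiples of basis vectors lie in L
  have hDsingle : ∀ j : Fin n, U.det • (Pi.single j 1 : Fin n → ℤ) ∈ L := by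
    intro j
    have hadj := Matrix.adjugate_mul U
    have heq : (U.det • (Pi.single j 1 : Fin n → ℤ)) = ∑ l, U.adjugate j l • u l := by
      funext jj
      have hrow' : ∑ l, U.adjugate j l * u l jj = U.det * (if j = jj then 1 else 0) := by
        simpa [Matrix.mul_apply, Matrix.one_apply, hU] using congrFun (congrFun hadj j) jj
      rw [Finset.sum_apply]
      simp only [Pi.smul_apply, smul_eq_mul]
      rw [hrow', Pi.single_apply]
      by_cases h : j = jj
      · subst h; simp
      · simp [h, Ne.symm h]
    rw [heq]
    exact Submodule.sum_mem _ (fun l _ => Submodule.smul_mem _ _ (humem l))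
  -- the finite fibers
  let T : Fin n → Set (Stmt5Aux.R k m)ˣ := fun j =>
    {w | w ^ U.det = Additive.toMul (β ⟨U.det • Pi.single j 1, hDsingle j⟩)}
  have hTfin : ∀ j, (T j).Finite := fun j => Stmt5Aux.zpow_fiber_finite U.det hdet _
  let F : (Multiplicative (Fin n → ℤ) →* (Stmt5Aux.R k m)ˣ) → (Fin n → (Stmt5Aux.R k m)ˣ) :=
    fun α => fun j => α (Multiplicative.ofAdd (Pi.single j 1))
  constructor
  · exact hexist
  · have himg : F '' {α : Multiplicative (Fin n → ℤ) →* (Stmt5Aux.R k m)ˣ |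
        ∀ i, α (Multiplicative.ofAdd (u i)) = c i} ⊆ Set.pi Set.univ T := by
      rintro w ⟨α, hα, rfl⟩ j _
      show (α (Multiplicative.ofAdd (Pi.single j 1))) ^ U.det
        = Additive.toMul (β ⟨U.det • Pi.single j 1, hDsingle j⟩)
      have h1 : Stmt5Aux.Lmap α (U.det • Pi.single j 1)
          = β ⟨U.det • Pi.single j 1, hDsingle j⟩ := key α hα _ (hDsingle j)
      have h3 : U.det • Stmt5Aux.Lmap α (Pi.single j 1)
          = Stmt5Aux.Lmap α (U.det • Pi.single j 1) := (map_smul _ _ _).symm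
      calc (α (Multiplicative.ofAdd (Pi.single j 1))) ^ U.det
          = Additive.toMul (U.det • Stmt5Aux.Lmap α (Pi.single j 1)) := by
            rw [toMul_zsmul]; rfl
        _ = Additive.toMul (β ⟨U.det • Pi.single j 1, hDsingle j⟩) := by rw [h3, h1]
    have hinj : Set.InjOn F {α : Multiplicative (Fin n → ℤ) →* (Stmt5Aux.R k m)ˣ |
        ∀ i, α (Multiplicative.ofAdd (u i)) = c i} := by
      intro α₁ _ α₂ _ hF
      apply Stmt5Aux.Lmap_inj
      apply Module.Basis.ext (Pi.basisFun ℤ (Fin n))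
      intro i
      rw [Pi.basisFun_apply]
      have h4 : α₁ (Multiplicative.ofAdd (Pi.single i 1))
          = α₂ (Multiplicative.ofAdd (Pi.single i 1)) := congrFun hF i
      rw [Stmt5Aux.Lmap_apply, Stmt5Aux.Lmap_apply, h4]
    exact Set.Finite.of_finite_image ((Set.Finite.pi (fun j => hTfin j)).subset himg) hinj
end

section
/- Let S be a submonoid of ℤⁿ and let a ∈ ℤⁿ satisfy ⟨a, u⟩ > 0 for every nonzero u ∈ S. Suppose u₁, …, u_n ∈ S are linearly independent over ℝ and Σ_{i=1}^{n} ⟨a, uᵢ⟩ ≤ Σ_{i=1}^{n} ⟨a, vᵢ⟩ for every n-tuple v₁, …, v_n of elements of S that is linearly independent over ℝ. Then each uᵢ is irreducible in S. -/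
theorem stmt8 (n : ℕ) (S : AddSubmonoid (Fin n → ℤ)) (a : Fin n → ℤ)
    (ha : ∀ u ∈ S, u ≠ 0 → 0 < ∑ j, a j * u j)
    (u : Fin n → Fin n → ℤ) (hu : ∀ i, u i ∈ S)
    (hind : LinearIndependent ℝ (fun i : Fin n => fun j => (u i j : ℝ)))
    (hmin : ∀ v : Fin n → Fin n → ℤ, (∀ i, v i ∈ S) →
      LinearIndependent ℝ (fun i : Fin n => fun j => (v i j : ℝ)) →
      (∑ i : Fin n, ∑ j, a j * u i j) ≤ ∑ i : Fin n, ∑ j, a j * v i j) :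
    ∀ i, IsIrredElem S (u i) := by
  intro i
  set A : Matrix (Fin n) (Fin n) ℝ := Matrix.of (fun i j => (u i j : ℝ)) with hA
  have hrows : LinearIndependent ℝ (fun i => A i) := hind
  have hunit : IsUnit A := Matrix.linearIndependent_rows_iff_isUnit.mp hrows
  have hdet : A.det ≠ 0 := by
    intro h
    rw [Matrix.isUnit_iff_isUnit_det, h] at hunit
    exact (not_isUnit_zero hunit)
  constructor
  · intro h0
    have := hind.ne_zero i
    apply this
    funext j
    simp [h0]
  · rintro ⟨v, w, hv, hw, hv0, hw0, heq⟩
    -- key: replacing u i by x (where the other part y is nonzero in S) with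
    -- det of updated matrix nonzero gives a contradiction
    have key : ∀ x y : Fin n → ℤ, x ∈ S → y ∈ S → y ≠ 0 → u i = x + y →
        (A.updateRow i (fun j => (x j : ℝ))).det ≠ 0 → False := by
      intro x y hx hy hy0 hxy hdetx
      set v' : Fin n → Fin n → ℤ := Function.update u i x with hv'
      have hv'S : ∀ k, v' k ∈ S := by
        intro k
        rcases eq_or_ne k i with rfl | hk
        · simpa [hv'] using hx
        · simpa [hv', Function.update_apply, hk] using hu k
      have hcast : (fun k : Fin n => fun j => (v' k j : ℝ)) =
          fun k => A.updateRow i (fun j => (x j : ℝ)) k := by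
        funext k j
        rcases eq_or_ne k i with rfl | hk
        · simp [hv']
        · rw [Matrix.updateRow_ne hk]
          simp only [hv', Function.update_of_ne hk]
          rfl
      have hli : LinearIndependent ℝ (fun k : Fin n => fun j => (v' k j : ℝ)) := by
        rw [hcast]
        exact Matrix.linearIndependent_rows_iff_isUnit.mpr
          ((Matrix.isUnit_iff_isUnit_det _).mpr (isUnit_iff_ne_zero.mpr hdetx))
      have hle := hmin v' hv'S hli
      -- but the sum for v' is strictly smaller
      have hsumeq : (fun k => ∑ j, a j * v' k j) =
          Function.update (fun k => ∑ j, a j * u k j) i (∑ j, a j * x j) := by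
        funext k
        rcases eq_or_ne k i with rfl | hk
        · simp [hv']
        · simp [hv', Function.update_apply, hk]
      have hposy : 0 < ∑ j, a j * y j := ha y hy hy0
      have hsplit : (∑ j, a j * u i j) = (∑ j, a j * x j) + ∑ j, a j * y j := by
        rw [← Finset.sum_add_distrib]
        apply Finset.sum_congr rfl
        intro j _
        rw [hxy]
        ring_nf
        simp [mul_add]
      have hlt : (∑ k : Fin n, ∑ j, a j * v' k j) < ∑ k : Fin n, ∑ j, a j * u k j := by
        rw [hsumeq]
        rw [Finset.sum_update_of_mem (Finset.mem_univ i)]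
        have : (∑ k : Fin n, ∑ j, a j * u k j) =
            (∑ j, a j * u i j) + ∑ k ∈ Finset.univ \ {i}, ∑ j, a j * u k j := by
          rw [← Finset.sum_update_of_mem (Finset.mem_univ i), Function.update_eq_self]
        rw [this]
        have : (∑ j, a j * x j) < ∑ j, a j * u i j := by
          rw [hsplit]; omega
        omega
      omega
    have hdetsum : (A.updateRow i (fun j => (v j : ℝ))).det +
        (A.updateRow i (fun j => (w j : ℝ))).det = A.det := by
      rw [← Matrix.det_updateRow_add]
      have hsum : ((fun j => (v j : ℝ)) + fun j => (w j : ℝ)) = A i := by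
        funext j
        show (v j : ℝ) + w j = ((u i j : ℤ) : ℝ)
        rw [heq]
        push_cast [Pi.add_apply]
        ring
      rw [hsum, Matrix.updateRow_eq_self]
    rcases eq_or_ne (A.updateRow i (fun j => (v j : ℝ))).det 0 with h1 | h1
    · have h2 : (A.updateRow i (fun j => (w j : ℝ))).det ≠ 0 := by
        intro h2
        rw [h1, h2] at hdetsum
        exact hdet (by linarith)
      exact key w v hw hv hv0 (by rw [heq]; ring) h2
    · exact key v w hv hw hw0 heq h1
end

section
/- Let P = ℂ[x₁, …, x_{n+1}] be a polynomial ring, let f ∈ P be a polynomial that is not divisible by xᵢ for any i = 1, …, n+1, and let L be the localization of P at the multiplicative submonoid generated by x₁, …, x_{n+1} (the Laurent polynomial ring). If the ideal of L generated by the image of f under the localization map is a prime ideal of L, then the ideal of P generated by f is a prime ideal of P. -/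
open MvPolynomial in
lemma mvPrime_X_aux {σ : Type*} [DecidableEq σ] (i : σ) :
    Prime (MvPolynomial.X i : MvPolynomial σ ℂ) := by
  set φ : MvPolynomial σ ℂ →+* MvPolynomial σ ℂ :=
    (MvPolynomial.aeval (fun j => if j = i then 0 else MvPolynomial.X j)).toRingHom with hφ
  have hφX : φ (MvPolynomial.X i) = 0 := by simp [hφ]
  have hkey : ∀ p : MvPolynomial σ ℂ, MvPolynomial.X i ∣ p - φ p := by
    intro p
    induction p using MvPolynomial.induction_on with
    | C a => simp [hφ]
    | add p q hp hq =>
      have h2 : p + q - φ (p + q) = (p - φ p) + (q - φ q) := by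
        rw [map_add]; ring
      rw [h2]; exact dvd_add hp hq
    | mul_X p j hp =>
      rw [map_mul]
      by_cases h : j = i
      · subst h
        rw [hφX, mul_zero, sub_zero]
        exact dvd_mul_left _ _
      · have hXj : φ (MvPolynomial.X j) = MvPolynomial.X j := by simp [hφ, h]
        have h2 : p * MvPolynomial.X j - φ p * φ (MvPolynomial.X j)
            = (p - φ p) * MvPolynomial.X j := by rw [hXj]; ring
        rw [h2]
        exact hp.mul_right _
  have hdvd : ∀ p : MvPolynomial σ ℂ, φ p = 0 → MvPolynomial.X i ∣ p := by
    intro p hp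
    simpa [hp] using hkey p
  refine ⟨MvPolynomial.X_ne_zero i, ?_, ?_⟩
  · intro h
    have := h.map φ
    rw [hφX] at this
    exact not_isUnit_zero this
  · intro a b ⟨c, hc⟩
    have h0 : φ a * φ b = 0 := by
      rw [← map_mul, hc, map_mul, hφX, zero_mul]
    rcases mul_eq_zero.mp h0 with h | h
    · exact Or.inl (hdvd a h)
    · exact Or.inr (hdvd b h)

theorem stmt9 (n : ℕ) (f : MvPolynomial (Fin (n + 1)) ℂ)
    (hf : ∀ i : Fin (n + 1), ¬ (MvPolynomial.X i ∣ f))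
    (hprime : (Ideal.span
        {algebraMap (MvPolynomial (Fin (n + 1)) ℂ)
          (Localization (Submonoid.closure
            (Set.range (MvPolynomial.X : Fin (n + 1) → MvPolynomial (Fin (n + 1)) ℂ)))) f}).IsPrime) :
    (Ideal.span {f}).IsPrime := by
  classical
  set M : Submonoid (MvPolynomial (Fin (n + 1)) ℂ) :=
    Submonoid.closure (Set.range (MvPolynomial.X : Fin (n + 1) → MvPolynomial (Fin (n + 1)) ℂ))
    with hMdef
  have hMle : M ≤ nonZeroDivisors (MvPolynomial (Fin (n + 1)) ℂ) := by
    rw [hMdef, Submonoid.closure_le]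
    rintro _ ⟨i, rfl⟩
    exact mem_nonZeroDivisors_of_ne_zero (MvPolynomial.X_ne_zero i)
  have hinj : Function.Injective
      (algebraMap (MvPolynomial (Fin (n + 1)) ℂ) (Localization M)) :=
    IsLocalization.injective _ hMle
  -- if f divides a * s for s in M, f divides a
  have hstep : ∀ s ∈ M, ∀ a, f ∣ a * s → f ∣ a := by
    intro s hs
    rw [hMdef] at hs
    induction hs using Submonoid.closure_induction with
    | mem x hx =>
      obtain ⟨i, rfl⟩ := hx
      intro a ⟨c, hc⟩
      have hXi : Prime (MvPolynomial.X i : MvPolynomial (Fin (n + 1)) ℂ) :=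
        mvPrime_X_aux i
      have hdvd : MvPolynomial.X i ∣ f * c := ⟨a, by linear_combination -hc⟩
      rcases hXi.2.2 _ _ hdvd with h | ⟨c', rfl⟩
      · exact absurd h (hf i)
      · refine ⟨c', mul_right_cancel₀ (MvPolynomial.X_ne_zero i) ?_⟩
        linear_combination hc
    | one => intro a h; simpa using h
    | mul x y hx hy ihx ihy =>
      intro a h
      exact ihx a (ihy (a * x) (by rwa [← mul_assoc] at h))
  have hspan : Ideal.span {f} =
      Ideal.comap (algebraMap (MvPolynomial (Fin (n + 1)) ℂ) (Localization M))
        (Ideal.span {algebraMap (MvPolynomial (Fin (n + 1)) ℂ) (Localization M) f}) := by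
    ext a
    simp only [Ideal.mem_comap, Ideal.mem_span_singleton]
    constructor
    · rintro ⟨c, rfl⟩
      exact ⟨algebraMap _ _ c, by rw [map_mul]⟩
    · rintro ⟨c, hc⟩
      obtain ⟨⟨x, s⟩, hx⟩ := IsLocalization.surj M c
      have heq : a * (s : MvPolynomial (Fin (n + 1)) ℂ) = f * x := by
        apply hinj
        rw [map_mul, map_mul, hc, mul_assoc, hx]
      exact hstep s s.2 a ⟨x, heq⟩
  rw [hspan]
  exact Ideal.IsPrime.comap _
end
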